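/- arXiv:2207.14367 — 2 statements merged into one kernel-verified Lean document; each statement's English description precedes it below -/
import Mathlib

section
/- Let λ ≥ 0, τ ≥ 0 and let f(P) = trace(CᵀP) + (λ/2)‖Pᵀ𝟙 − k‖² + (τ/2)‖P − P⁰‖_F². Then the gradient of f is Lipschitz continuous with constant λN + τ: for all P₁, P₂ ∈ ℝ^{N×M}, ‖∇f(P₁) − ∇f(P₂)‖_F ≤ (λN + τ) · ‖P₁ − P₂‖_F. -/
open Matrix

/-- `ℝ^{N×M}` with the Frobenius inner product and norm, modeled as a Euclidean space
indexed by entry positions `(i, j)`. -/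
abbrev MatE (N M : ℕ) := EuclideanSpace ℝ (Fin N × Fin M)

/-- `trace(Cᵀ P)` for `C, P ∈ ℝ^{N×M}`. -/
noncomputable def traceCT {N M : ℕ} (C P : MatE N M) : ℝ :=
  Matrix.trace ((Matrix.of fun i j => C (i, j))ᵀ * (Matrix.of fun i j => P (i, j)))

/-- `Pᵀ𝟙 ∈ ℝ^M`, the vector of column sums of `P`. -/
noncomputable def colSums {N M : ℕ} (P : MatE N M) : EuclideanSpace ℝ (Fin M) :=
  WithLp.toLp 2 (fun j => ∑ i, P (i, j))

/-- The OpArt objective with assignment prior: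
`f(P) = trace(CᵀP) + (λ/2)‖Pᵀ𝟙 − k‖² + (τ/2)‖P − P⁰‖_F²`. -/
noncomputable def opArtObjective {N M : ℕ} (C P0 : MatE N M)
    (k : EuclideanSpace ℝ (Fin M)) (lam tau : ℝ) (P : MatE N M) : ℝ :=
  traceCT C P + (lam / 2) * ‖colSums P - k‖ ^ 2 + (tau / 2) * ‖P - P0‖ ^ 2

/-! ### Auxiliary material -/

/-- The matrix whose every row is `v`. -/
noncomputable def rep {N M : ℕ} (v : EuclideanSpace ℝ (Fin M)) : MatE N M :=
  WithLp.toLp 2 (fun p : Fin N × Fin M => (v p.2 : ℝ))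

@[simp] lemma rep_apply {N M : ℕ} (v : EuclideanSpace ℝ (Fin M)) (p : Fin N × Fin M) :
    rep v p = v p.2 := rfl

/-- `colSums` as a continuous linear map. -/
noncomputable def colSumsL (N M : ℕ) : MatE N M →L[ℝ] EuclideanSpace ℝ (Fin M) :=
  LinearMap.toContinuousLinearMap
    { toFun := fun P => colSums P
      map_add' := fun x y => PiLp.ext fun j => by
        show ∑ i, (x (i, j) + y (i, j)) = (∑ i, x (i, j)) + ∑ i, y (i, j)
        exact Finset.sum_add_distrib
      map_smul' := fun c x => PiLp.ext fun j => by
        show ∑ i, c * x (i, j) = c * ∑ i, x (i, j)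
        exact (Finset.mul_sum _ _ _).symm }

lemma colSumsL_apply {N M : ℕ} (P : MatE N M) : colSumsL N M P = colSums P := rfl

lemma traceCT_eq_inner {N M : ℕ} (C P : MatE N M) :
    traceCT C P = inner (𝕜 := ℝ) C P := by
  rw [traceCT, PiLp.inner_apply, Matrix.trace, Fintype.sum_prod_type_right]
  simp only [Matrix.diag, Matrix.mul_apply, Matrix.transpose_apply, Matrix.of_apply,
    RCLike.inner_apply, conj_trivial]
  exact Finset.sum_congr rfl fun _ _ => Finset.sum_congr rfl fun _ _ => mul_comm _ _

/-- `rep` is adjoint to `colSumsL`. -/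
lemma adj_inner {N M : ℕ} (v : EuclideanSpace ℝ (Fin M)) (Q : MatE N M) :
    inner (𝕜 := ℝ) (rep v : MatE N M) Q = inner (𝕜 := ℝ) v (colSumsL N M Q) := by
  rw [PiLp.inner_apply, PiLp.inner_apply, Fintype.sum_prod_type_right]
  simp only [RCLike.inner_apply, conj_trivial, colSumsL, LinearMap.coe_toContinuousLinearMap',
    LinearMap.coe_mk, AddHom.coe_mk]
  simp [colSums, Finset.mul_sum, Finset.sum_mul]

/-- The explicit gradient of the objective. -/
noncomputable def gradF {N M : ℕ} (C P0 : MatE N M) (k : EuclideanSpace ℝ (Fin M))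
    (lam tau : ℝ) (P : MatE N M) : MatE N M :=
  C + lam • rep (colSums P - k) + tau • (P - P0)

lemma hasGradient {N M : ℕ} (C P0 : MatE N M) (k : EuclideanSpace ℝ (Fin M))
    (lam tau : ℝ) (P : MatE N M) :
    HasGradientAt (opArtObjective C P0 k lam tau) (gradF C P0 k lam tau P) P := by
  rw [hasGradientAt_iff_hasFDerivAt]
  have hfun : opArtObjective C P0 k lam tau = fun Q =>
      inner (𝕜 := ℝ) C Q
        + (lam / 2) * inner (𝕜 := ℝ) (colSumsL N M Q - k) (colSumsL N M Q - k)
        + (tau / 2) * inner (𝕜 := ℝ) (Q - P0) (Q - P0) := by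
    funext Q
    rw [opArtObjective, traceCT_eq_inner, colSumsL_apply, real_inner_self_eq_norm_sq,
      real_inner_self_eq_norm_sq]
  rw [hfun]
  have h1 : HasFDerivAt (fun Q : MatE N M => inner (𝕜 := ℝ) C Q) (innerSL ℝ C) P :=
    (innerSL ℝ C).hasFDerivAt
  have hT : HasFDerivAt (fun Q : MatE N M => colSumsL N M Q - k) (colSumsL N M) P :=
    (colSumsL N M).hasFDerivAt.sub_const k
  have h2 := (hT.inner ℝ hT).const_mul (lam / 2)
  have hI : HasFDerivAt (fun Q : MatE N M => Q - P0)
      (ContinuousLinearMap.id ℝ (MatE N M)) P :=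
    (ContinuousLinearMap.id ℝ (MatE N M)).hasFDerivAt.sub_const P0
  have h3 := (hI.inner ℝ hI).const_mul (tau / 2)
  have h := (h1.add h2).add h3
  refine h.congr_fderiv ?_
  ext Q
  simp only [InnerProductSpace.toDual_apply_apply, ContinuousLinearMap.add_apply,
    ContinuousLinearMap.coe_smul', Pi.smul_apply, smul_eq_mul,
    ContinuousLinearMap.comp_apply, ContinuousLinearMap.prod_apply, fderivInnerCLM_apply,
    ContinuousLinearMap.coe_id', id_eq, innerSL_apply_apply, gradF]
  rw [inner_add_left, inner_add_left, real_inner_smul_left, real_inner_smul_left,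
    adj_inner, real_inner_comm (colSumsL N M P - k)]
  have : inner (𝕜 := ℝ) (P - P0) Q = inner (𝕜 := ℝ) Q (P - P0) := real_inner_comm _ _
  have hkk : (colSums P - k : EuclideanSpace ℝ (Fin M)) = colSumsL N M P - k := rfl
  rw [hkk, this]
  ring

lemma key_bound {N M : ℕ} (lam tau : ℝ) (hlam : 0 ≤ lam) (htau : 0 ≤ tau) (D : MatE N M) :
    ‖lam • (rep (colSums D) : MatE N M) + tau • D‖ ≤ (lam * N + tau) * ‖D‖ := by
  have hR : (0:ℝ) ≤ lam * N + tau := by positivity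
  rw [EuclideanSpace.norm_eq, EuclideanSpace.norm_eq,
    show (lam * (N:ℝ) + tau) * Real.sqrt (∑ p, ‖D p‖ ^ 2)
        = Real.sqrt ((lam * N + tau) ^ 2 * ∑ p, ‖D p‖ ^ 2) by
      rw [Real.sqrt_mul (by positivity), Real.sqrt_sq hR]]
  apply Real.sqrt_le_sqrt
  simp only [Real.norm_eq_abs, sq_abs, PiLp.add_apply, PiLp.smul_apply, smul_eq_mul, rep_apply]
  rw [Fintype.sum_prod_type_right, Fintype.sum_prod_type_right, Finset.mul_sum]
  apply Finset.sum_le_sum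
  intro j _
  have hs : colSums D j = ∑ i, D (i, j) := rfl
  set s := ∑ i, D (i, j) with hsdef
  have hexp : ∑ i, (lam * colSums D (i, j).2 + tau * D (i, j)) ^ 2
      = (N:ℝ) * (lam ^ 2 * s ^ 2) + (2 * lam * tau * s) * s + tau ^ 2 * ∑ i, D (i, j) ^ 2 := by
    have h1 : ∀ i : Fin N, (lam * colSums D (i, j).2 + tau * D (i, j)) ^ 2
        = lam ^ 2 * s ^ 2 + (2 * lam * tau * s) * D (i, j) + tau ^ 2 * D (i, j) ^ 2 := by
      intro i; rw [show colSums D (i, j).2 = s from hs]; ring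
    rw [Finset.sum_congr rfl fun i _ => h1 i, Finset.sum_add_distrib, Finset.sum_add_distrib,
      Finset.sum_const, ← Finset.mul_sum, ← Finset.mul_sum, ← hsdef]
    simp [Finset.card_univ]
  rw [hexp]
  have hcs : s ^ 2 ≤ (N:ℝ) * ∑ i, D (i, j) ^ 2 := by
    have := sq_sum_le_card_mul_sum_sq (s := Finset.univ) (f := fun i : Fin N => D (i, j))
    simpa using this
  have hq : (0:ℝ) ≤ ∑ i, D (i, j) ^ 2 := Finset.sum_nonneg fun i _ => sq_nonneg _
  nlinarith [mul_le_mul_of_nonneg_left hcs (by positivity : (0:ℝ) ≤ lam ^ 2),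
    mul_le_mul_of_nonneg_left hcs (by positivity : (0:ℝ) ≤ 2 * lam * tau)]

/-- Let `λ ≥ 0`, `τ ≥ 0` and
`f(P) = trace(CᵀP) + (λ/2)‖Pᵀ𝟙 − k‖² + (τ/2)‖P − P⁰‖_F²`. Then `∇f` is Lipschitz with
constant `λN + τ`: `‖∇f(P₁) − ∇f(P₂)‖_F ≤ (λN + τ)·‖P₁ − P₂‖_F` for all `P₁, P₂`. -/
theorem gradient_lipschitz_with_prior (N M : ℕ) (C P0 : MatE N M)
    (k : EuclideanSpace ℝ (Fin M)) (lam tau : ℝ) (hlam : 0 ≤ lam) (htau : 0 ≤ tau) :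
    ∀ P₁ P₂ : MatE N M,
      ‖gradient (opArtObjective C P0 k lam tau) P₁
        - gradient (opArtObjective C P0 k lam tau) P₂‖ ≤ (lam * N + tau) * ‖P₁ - P₂‖ := by
  intro P₁ P₂
  rw [(hasGradient C P0 k lam tau P₁).gradient, (hasGradient C P0 k lam tau P₂).gradient]
  have hdiff : gradF C P0 k lam tau P₁ - gradF C P0 k lam tau P₂
      = lam • (rep (colSums (P₁ - P₂)) : MatE N M) + tau • (P₁ - P₂) := by
    ext p
    have hc : colSums (P₁ - P₂) p.2 = colSums P₁ p.2 - colSums P₂ p.2 := by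
      exact (Finset.sum_sub_distrib (s := Finset.univ)
        (f := fun i : Fin _ => P₁ (i, p.2)) (g := fun i => P₂ (i, p.2)))
    show (gradF C P0 k lam tau P₁) p - (gradF C P0 k lam tau P₂) p
      = lam * colSums (P₁ - P₂) p.2 + tau * (P₁ p - P₂ p)
    simp only [gradF, PiLp.add_apply, PiLp.smul_apply, PiLp.sub_apply, rep_apply, smul_eq_mul, hc]
    ring
  rw [hdiff]
  exact key_bound lam tau hlam htau (P₁ - P₂)
end

section
/- Let M ≥ 1, h > 0, and let u ∈ ℝ^M be sorted in decreasing order: u₁ ≥ u₂ ≥ ... ≥ u_M. Define L = max{k ∈ {1,...,M} : (Σ_{r=1}^k u_r − h)/k < u_k} (this set contains k = 1, hence is nonempty), set τ = (Σ_{ℓ=1}^L u_ℓ − h)/L, and define v ∈ ℝ^M by v_j = max(u_j − τ, 0) for each j. Then v lies in the scaled simplex Δ_h = {x ∈ ℝ^M : x_j ≥ 0 for all j, Σ_{j=1}^M x_j = h}, and v is the Euclidean projection of u onto Δ_h: for every x ∈ Δ_h, ‖v − u‖ ≤ ‖x − u‖, with equality only if x = v. -/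
/-- Let `M ≥ 1`, `h > 0`, and `u ∈ ℝ^M` sorted in decreasing order. Let `K`
be the set of (0-based) indices `k` with `(Σ_{r≤k} u_r − h)/(k+1) < u_k` (in 1-based terms,
the indices `k ∈ {1,…,M}` with `(Σ_{r=1}^k u_r − h)/k < u_k`). Then `K` contains the first
index (so it is nonempty), and for `L = max K`, `τ = (Σ_{r≤L} u_r − h)/(L+1)`, and
`v_j = max(u_j − τ, 0)`, the vector `v` lies in the scaled simplex
`Δ_h = {x : x_j ≥ 0, Σ_j x_j = h}` and is the Euclidean projection of `u` onto `Δ_h`: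
`‖v − u‖ ≤ ‖x − u‖` for every `x ∈ Δ_h`, with equality only if `x = v`. -/
theorem simplex_projection_sort_threshold (M : ℕ) (hM : 0 < M) (h : ℝ) (hh : 0 < h)
    (u : EuclideanSpace ℝ (Fin M))
    (hsort : ∀ i j : Fin M, i ≤ j → u j ≤ u i)
    (K : Finset (Fin M))
    (hK : K = Finset.univ.filter
      (fun k : Fin M => ((∑ r ∈ Finset.Iic k, u r) - h) / ((k : ℕ) + 1) < u k)) :
    (⟨0, hM⟩ : Fin M) ∈ K ∧
    ∀ L : Fin M, L ∈ K → (∀ k ∈ K, k ≤ L) →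
      ∀ t : ℝ, t = ((∑ r ∈ Finset.Iic L, u r) - h) / ((L : ℕ) + 1) →
      ∀ v : EuclideanSpace ℝ (Fin M), (∀ j, v j = max (u j - t) 0) →
        ((∀ j, 0 ≤ v j) ∧ ∑ j, v j = h) ∧
        ∀ x : EuclideanSpace ℝ (Fin M), (∀ j, 0 ≤ x j) → (∑ j, x j = h) →
          ‖v - u‖ ≤ ‖x - u‖ ∧ (‖v - u‖ = ‖x - u‖ → x = v) := by
  have hmemK : ∀ k : Fin M, k ∈ K ↔ ((∑ r ∈ Finset.Iic k, u r) - h) / ((k : ℕ) + 1) < u k := by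
    intro k; simp [hK]
  constructor
  · rw [hmemK]
    have h0 : Finset.Iic (⟨0, hM⟩ : Fin M) = {(⟨0, hM⟩ : Fin M)} := by
      ext k
      simp only [Finset.mem_Iic, Finset.mem_singleton]
      constructor
      · intro hk; exact le_antisymm hk (by exact Fin.mk_le_of_le_val (Nat.zero_le _))
      · intro hk; exact le_of_eq hk
    rw [h0]
    simp
    linarith
  · intro L hL hLmax t ht v hv
    have hLpos : (0:ℝ) < (L : ℕ) + 1 := by positivity
    -- t < u j for j ≤ L
    have htL : t < u L := ht ▸ (hmemK L).mp hL
    have hA : ∀ j : Fin M, j ≤ L → t < u j := fun j hj => lt_of_lt_of_le htL (hsort j L hj)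
    -- u j ≤ t for j > L
    have hB : ∀ j : Fin M, L < j → u j ≤ t := by
      intro j hj
      by_contra hc
      push_neg at hc
      have hL1M : (L : ℕ) + 1 < M := lt_of_le_of_lt (Nat.succ_le_of_lt hj) j.is_lt
      set L' : Fin M := ⟨(L : ℕ) + 1, hL1M⟩ with hL'
      have hval : ((L' : Fin M) : ℕ) = (L : ℕ) + 1 := rfl
      have hjval : (L : ℕ) < (j : ℕ) := hj
      have hLL' : L < L' := by rw [Fin.lt_def, hval]; omega
      have hutL' : t < u L' :=
        lt_of_lt_of_le hc (hsort L' j (by rw [Fin.le_def, hval]; omega))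
      have hIic : Finset.Iic L' = insert L' (Finset.Iic L) := by
        ext k
        simp only [Finset.mem_Iic, Finset.mem_insert, Fin.le_def, Fin.ext_iff, hval]
        omega
      have hnot : L' ∉ Finset.Iic L := by
        simp only [Finset.mem_Iic, Fin.le_def, hval]; omega
      have hsum : ∑ r ∈ Finset.Iic L', u r = u L' + ∑ r ∈ Finset.Iic L, u r := by
        rw [hIic, Finset.sum_insert hnot]
      have hSL : (∑ r ∈ Finset.Iic L, u r) - h < ((L:ℕ) + 1) * u L' := by
        have h2 := ht ▸ hutL'
        rw [div_lt_iff₀ hLpos] at h2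
        linarith
      have hmem : L' ∈ K := by
        rw [hmemK, div_lt_iff₀ (by positivity : (0:ℝ) < ((L' : ℕ) : ℝ) + 1), hsum, hval]
        push_cast
        linarith
      exact absurd (hLmax L' hmem) (not_le.mpr hLL')
    have hvle : ∀ j : Fin M, j ≤ L → v j = u j - t := by
      intro j hj; rw [hv]; exact max_eq_left (by linarith [hA j hj])
    have hvgt : ∀ j : Fin M, L < j → v j = 0 := by
      intro j hj; rw [hv]; exact max_eq_right (by linarith [hB j hj])
    have hcard : (Finset.Iic L).card = (L : ℕ) + 1 := Fin.card_Iic L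
    have hsumv : ∑ j, v j = h := by
      rw [← Finset.sum_add_sum_compl (Finset.Iic L)]
      have h1 : ∑ j ∈ (Finset.Iic L)ᶜ, v j = 0 := by
        apply Finset.sum_eq_zero
        intro j hj
        simp only [Finset.mem_compl, Finset.mem_Iic, not_le] at hj
        exact hvgt j hj
      have h2 : ∑ j ∈ Finset.Iic L, v j = (∑ r ∈ Finset.Iic L, u r) - ((L:ℕ)+1) * t := by
        rw [Finset.sum_congr rfl (fun j hj => hvle j (Finset.mem_Iic.mp hj))]
        rw [Finset.sum_sub_distrib, Finset.sum_const, hcard]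
        push_cast; ring
      rw [h1, h2, ht]
      field_simp
      ring
    refine ⟨⟨fun j => by rw [hv]; exact le_max_right _ _, hsumv⟩, ?_⟩
    intro x hx hxsum
    -- variational inequality
    have hinner : (inner ℝ (x - v) (u - v) : ℝ) ≤ 0 := by
      have hcalc : (inner ℝ (x - v) (u - v) : ℝ) = ∑ j, (x j - v j) * (u j - v j) := by
        rw [PiLp.inner_apply]
        apply Finset.sum_congr rfl
        intro j _
        simp [PiLp.sub_apply]
        ring
      rw [hcalc]
      have hle : ∑ j, (x j - v j) * (u j - v j) ≤ ∑ j, (x j - v j) * t := by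
        apply Finset.sum_le_sum
        intro j _
        rcases le_or_gt j L with hj | hj
        · rw [hvle j hj]
          have he : u j - (u j - t) = t := by ring
          rw [he]
        · rw [hvgt j hj]
          simp only [sub_zero]
          exact mul_le_mul_of_nonneg_left (hB j hj) (by simpa using hx j)
      refine le_trans hle ?_
      rw [← Finset.sum_mul, Finset.sum_sub_distrib, hxsum, hsumv]
      simp
    have hkey : ‖x - u‖ ^ 2 = ‖x - v‖ ^ 2 + 2 * (inner ℝ (x - v) (v - u) : ℝ) + ‖v - u‖ ^ 2 := by
      have : x - u = (x - v) + (v - u) := by abel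
      rw [this, norm_add_sq_real]
    have hinner' : 0 ≤ (inner ℝ (x - v) (v - u) : ℝ) := by
      have : (inner ℝ (x - v) (v - u) : ℝ) = - (inner ℝ (x - v) (u - v) : ℝ) := by
        rw [← inner_neg_right]; congr 1; abel
      rw [this]; linarith
    have hsq : ‖v - u‖ ^ 2 + ‖x - v‖ ^ 2 ≤ ‖x - u‖ ^ 2 := by nlinarith
    have hle : ‖v - u‖ ≤ ‖x - u‖ := by
      nlinarith [norm_nonneg (v - u), norm_nonneg (x - u), norm_nonneg (x - v), sq_nonneg (‖x - v‖)]
    refine ⟨hle, fun heq => ?_⟩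
    have : ‖x - v‖ ^ 2 ≤ 0 := by rw [heq] at hsq; linarith
    have hxv : ‖x - v‖ = 0 := le_antisymm (by nlinarith [norm_nonneg (x - v)]) (norm_nonneg _)
    exact sub_eq_zero.mp (norm_eq_zero.mp hxv)
end
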